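/- (Proposition 2(ii), BASMU full-model part.) Assume (1/n) M̃_nᵀ M̃_n converges in probability to H + σ_M² I, (1/n) M̃_nᵀ U_n converges in probability to h⁰, (1/n) M̃_nᵀ Û_n converges in probability to ĥ, and the deterministic matrices satisfy (1/n) D_n → 0. Then the conditional bias of the full-model (BASMU) estimator, B_n^F = (M̃_nᵀM̃_n + D_n)⁻¹ (M̃_nᵀ (U_n − Û_n) − D_n θ⁰), converges in probability to (H + σ_M² I)⁻¹ (h⁰ − ĥ). -/

import Mathlib

open MeasureTheory Matrix Filter Topology ENNReal

section Helpers

variable {Ω : Type*} [MeasurableSpace Ω] (P : Measure Ω)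

/-- Deterministic convergence implies convergence in measure. -/
lemma tim_of_tendsto {E : Type*} [PseudoMetricSpace E] {c : ℕ → E} {b : E}
    (h : Tendsto c atTop (𝓝 b)) :
    TendstoInMeasure P (fun n (_ : Ω) => c n) atTop (fun _ => b) := by
  rw [tendstoInMeasure_iff_dist]
  intro ε hε
  have he : ∀ᶠ n in atTop, dist (c n) b < ε := (Metric.tendsto_nhds.mp h) ε hε
  refine Filter.Tendsto.congr' ?_ (tendsto_const_nhds : Tendsto (fun _ : ℕ => (0 : ENNReal)) atTop (𝓝 0))
  filter_upwards [he] with n hn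
  have : {ω : Ω | ε ≤ dist (c n) b} = ∅ := by
    ext ω; simp only [Set.mem_setOf_eq, Set.mem_empty_iff_false, iff_false, not_le]; exact hn
  simp [this]

/-- Composition with a function continuous at the (constant) limit preserves
convergence in measure. -/
lemma tim_comp {E F : Type*} [PseudoMetricSpace E] [PseudoMetricSpace F]
    {f : ℕ → Ω → E} {a : E} (hf : TendstoInMeasure P f atTop (fun _ => a))
    {g : E → F} (hg : ContinuousAt g a) :
    TendstoInMeasure P (fun n ω => g (f n ω)) atTop (fun _ => g a) := by
  rw [tendstoInMeasure_iff_dist] at hf ⊢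
  intro ε hε
  obtain ⟨δ, hδ, hδ'⟩ := Metric.continuousAt_iff.mp hg ε hε
  refine tendsto_of_tendsto_of_tendsto_of_le_of_le tendsto_const_nhds (hf δ hδ)
    (fun n => zero_le) (fun n => measure_mono ?_)
  intro ω hω
  simp only [Set.mem_setOf_eq] at hω ⊢
  by_contra hcon
  push_neg at hcon
  exact absurd (hδ' hcon) (not_lt.mpr hω)

/-- Convergence in measure of a pair. -/
lemma tim_pair {E F : Type*} [PseudoMetricSpace E] [PseudoMetricSpace F]
    {f : ℕ → Ω → E} {a : E} {f' : ℕ → Ω → F} {b : F}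
    (hf : TendstoInMeasure P f atTop (fun _ => a))
    (hf' : TendstoInMeasure P f' atTop (fun _ => b)) :
    TendstoInMeasure P (fun n ω => (f n ω, f' n ω)) atTop (fun _ => (a, b)) := by
  rw [tendstoInMeasure_iff_dist] at hf hf' ⊢
  intro ε hε
  have hsum : Tendsto (fun n => P {ω | ε ≤ dist (f n ω) a} + P {ω | ε ≤ dist (f' n ω) b})
      atTop (𝓝 0) := by
    simpa using (hf ε hε).add (hf' ε hε)
  refine tendsto_of_tendsto_of_tendsto_of_le_of_le tendsto_const_nhds hsum
    (fun n => zero_le) (fun n => ?_)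
  refine le_trans (measure_mono ?_) (measure_union_le _ _)
  intro ω hω
  simp only [Set.mem_setOf_eq, Prod.dist_eq, le_max_iff] at hω
  rcases hω with h | h
  · exact Or.inl h
  · exact Or.inr h

/-- Coordinatewise convergence in measure implies convergence in measure in a
finite product (with the sup metric). -/
lemma tim_pi {ι : Type*} [Fintype ι] {E : Type*} [PseudoMetricSpace E]
    {f : ℕ → Ω → ι → E} {a : ι → E}
    (h : ∀ i, TendstoInMeasure P (fun n ω => f n ω i) atTop (fun _ => a i)) :
    TendstoInMeasure P f atTop (fun _ => a) := by
  simp_rw [tendstoInMeasure_iff_dist] at h ⊢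
  intro ε hε
  have hsum : Tendsto (fun n => ∑ i : ι, P {ω | ε ≤ dist (f n ω i) (a i)}) atTop (𝓝 0) := by
    have := tendsto_finset_sum (Finset.univ : Finset ι) (fun i _ => h i ε hε)
    simpa using this
  refine tendsto_of_tendsto_of_tendsto_of_le_of_le tendsto_const_nhds hsum
    (fun n => zero_le) (fun n => ?_)
  have hsub : {ω : Ω | ε ≤ dist (f n ω) a} ⊆ ⋃ i, {ω : Ω | ε ≤ dist (f n ω i) (a i)} := by
    intro ω hω
    simp only [Set.mem_setOf_eq] at hω
    by_contra hc
    simp only [Set.mem_iUnion, Set.mem_setOf_eq, not_exists, not_le] at hc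
    exact absurd ((dist_pi_lt_iff hε).mpr hc) (not_lt.mpr hω)
  calc P {ω : Ω | ε ≤ dist (f n ω) a} ≤ P (⋃ i, {ω : Ω | ε ≤ dist (f n ω i) (a i)}) :=
        measure_mono hsub
    _ ≤ ∑' i, P {ω : Ω | ε ≤ dist (f n ω i) (a i)} := measure_iUnion_le _
    _ = ∑ i : ι, P {ω : Ω | ε ≤ dist (f n ω i) (a i)} := tsum_fintype _

end Helpers

/-- Scaling a square real matrix by a nonzero constant scales the (generalized) inverse. -/
lemma matrix_smul_inv {L : ℕ} (c : ℝ) (hc : c ≠ 0) (A : Matrix (Fin L) (Fin L) ℝ) :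
    (c • A)⁻¹ = c⁻¹ • A⁻¹ := by
  rcases Nat.eq_zero_or_pos L with hL | hL
  · subst hL
    apply Subsingleton.elim
  · rw [Matrix.inv_def, Matrix.inv_def, Matrix.det_smul, Matrix.adjugate_smul]
    simp only [Fintype.card_fin, Ring.inverse_eq_inv', smul_smul]
    congr 1
    have hpow : c ^ L = c * c ^ (L - 1) := by
      rw [← pow_succ']
      congr 1
      omega
    rw [hpow]
    calc (c * c ^ (L - 1) * A.det)⁻¹ * c ^ (L - 1)
        = (c ^ (L - 1) * (c ^ (L - 1))⁻¹) * (c⁻¹ * A.det⁻¹) := by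
          rw [mul_inv, mul_inv]; ring
      _ = c⁻¹ * A.det⁻¹ := by rw [mul_inv_cancel₀ (pow_ne_zero _ hc), one_mul]

/-- **Proposition 2(ii), BASMU full-model part.**
If `(1/n) M̃ₙᵀM̃ₙ → H + σ_M² I` in probability (entrywise), `(1/n) M̃ₙᵀUₙ → h⁰`,
`(1/n) M̃ₙᵀÛₙ → ĥ` in probability, and `(1/n) Dₙ → 0`, then the conditional bias of the
full-model (BASMU) estimator, `Bₙᶠ = (M̃ₙᵀM̃ₙ + Dₙ)⁻¹ (M̃ₙᵀ(Uₙ − Ûₙ) − Dₙθ⁰)`,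
converges in probability to `(H + σ_M² I)⁻¹ (h⁰ − ĥ)`. -/
theorem basmu_asymptotic_bias
    {Ω : Type*} [MeasurableSpace Ω] (P : Measure Ω) [IsProbabilityMeasure P]
    {L : ℕ} (σM : ℝ) (hσM : 0 < σM)
    (H : Matrix (Fin L) (Fin L) ℝ) (hH : H.PosSemidef)
    (h0 hhat : Fin L → ℝ) (θ0 : Fin L → ℝ)
    (M : (n : ℕ) → Ω → Matrix (Fin n) (Fin L) ℝ)
    (U Uhat : (n : ℕ) → Ω → Fin n → ℝ)
    (D : ℕ → Matrix (Fin L) (Fin L) ℝ) (hD : ∀ n, (D n).PosSemidef)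
    (hMM : ∀ l l' : Fin L, TendstoInMeasure P
      (fun (n : ℕ) (ω : Ω) => (n : ℝ)⁻¹ * (((M n ω)ᵀ * M n ω) l l')) atTop
      (fun _ => (H + σM ^ 2 • (1 : Matrix (Fin L) (Fin L) ℝ)) l l'))
    (hMU : ∀ l : Fin L, TendstoInMeasure P
      (fun (n : ℕ) (ω : Ω) => (n : ℝ)⁻¹ * (((M n ω)ᵀ *ᵥ U n ω) l)) atTop
      (fun _ => h0 l))
    (hMUhat : ∀ l : Fin L, TendstoInMeasure P
      (fun (n : ℕ) (ω : Ω) => (n : ℝ)⁻¹ * (((M n ω)ᵀ *ᵥ Uhat n ω) l)) atTop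
      (fun _ => hhat l))
    (hDlim : Tendsto (fun n : ℕ => ((n : ℝ)⁻¹) • D n) atTop (nhds 0)) :
    TendstoInMeasure P
      (fun (n : ℕ) (ω : Ω) =>
        ((M n ω)ᵀ * M n ω + D n)⁻¹ *ᵥ
          ((M n ω)ᵀ *ᵥ (U n ω - Uhat n ω) - (D n) *ᵥ θ0)) atTop
      (fun _ => (H + σM ^ 2 • (1 : Matrix (Fin L) (Fin L) ℝ))⁻¹ *ᵥ (h0 - hhat)) := by
  classical
  set A0 : Matrix (Fin L) (Fin L) ℝ := H + σM ^ 2 • (1 : Matrix (Fin L) (Fin L) ℝ) with hA0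
  -- A0 is positive definite, hence has nonzero determinant
  have hone : (σM ^ 2 • (1 : Matrix (Fin L) (Fin L) ℝ)).PosDef := by
    rw [Matrix.smul_one_eq_diagonal]
    exact Matrix.posDef_diagonal_iff.mpr fun _ => by positivity
  have hA0pd : A0.PosDef := Matrix.PosDef.posSemidef_add hH hone
  have hdetne : A0.det ≠ 0 := ne_of_gt hA0pd.det_pos
  -- The continuous "solve" map
  set g : (Fin L → Fin L → ℝ) × (Fin L → ℝ) → (Fin L → ℝ) :=
    fun p => (Matrix.of p.1)⁻¹ *ᵥ p.2 with hg
  have hgeq : g = fun p => ((Matrix.of p.1).det)⁻¹ • ((Matrix.of p.1).adjugate *ᵥ p.2) := by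
    funext p
    rw [hg]
    simp only
    rw [Matrix.inv_def, Ring.inverse_eq_inv', Matrix.smul_mulVec]
  -- continuity of g at the limit point
  have hgc : ContinuousAt g ((fun i j => A0 i j), h0 - hhat) := by
    rw [hgeq]
    have h1 : Continuous fun p : (Fin L → Fin L → ℝ) × (Fin L → ℝ) => (Matrix.of p.1) :=
      continuous_fst
    have hdetc : Continuous fun p : (Fin L → Fin L → ℝ) × (Fin L → ℝ) =>
        (Matrix.of p.1).det := h1.matrix_det
    have hadj : Continuous fun p : (Fin L → Fin L → ℝ) × (Fin L → ℝ) =>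
        (Matrix.of p.1).adjugate *ᵥ p.2 := h1.matrix_adjugate.matrix_mulVec continuous_snd
    have hdetat : ContinuousAt
        (fun p : (Fin L → Fin L → ℝ) × (Fin L → ℝ) => ((Matrix.of p.1).det)⁻¹)
        ((fun i j => A0 i j), h0 - hhat) := by
      refine ContinuousAt.comp ?_ hdetc.continuousAt
      exact continuousAt_inv₀ (by exact hdetne)
    exact hdetat.smul hadj.continuousAt
  -- the entrywise data
  set F1 : ℕ → Ω → Fin L → Fin L → ℝ :=
    fun n ω l l' => (n : ℝ)⁻¹ * (((M n ω)ᵀ * M n ω) l l') + (((n : ℝ)⁻¹ • D n) l l') with hF1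
  set F2 : ℕ → Ω → Fin L → ℝ :=
    fun n ω l => (n : ℝ)⁻¹ * (((M n ω)ᵀ *ᵥ U n ω) l) - (n : ℝ)⁻¹ * (((M n ω)ᵀ *ᵥ Uhat n ω) l)
      - (((n : ℝ)⁻¹ • (D n *ᵥ θ0)) l) with hF2
  -- convergence in measure of F1
  have hF1lim : TendstoInMeasure P F1 atTop (fun _ => (fun l l' => A0 l l')) := by
    refine tim_pi P fun l => tim_pi P fun l' => ?_
    have hd : Tendsto (fun n : ℕ => (((n : ℝ)⁻¹ • D n) l l')) atTop (𝓝 0) := by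
      have hcont : Continuous fun A : Matrix (Fin L) (Fin L) ℝ => A l l' :=
        continuous_id.matrix_elem l l'
      have := (hcont.tendsto _).comp hDlim
      simpa [Function.comp_def] using this
    have h1 := hMM l l'
    have h2 := tim_of_tendsto (Ω := Ω) P hd
    have h3 := tim_pair P h1 h2
    have := tim_comp P h3
      (g := fun p : ℝ × ℝ => p.1 + p.2) (by fun_prop)
    simpa [hF1] using this
  -- convergence in measure of F2
  have hF2lim : TendstoInMeasure P F2 atTop (fun _ => h0 - hhat) := by
    refine tim_pi P fun l => ?_
    have hd : Tendsto (fun n : ℕ => (((n : ℝ)⁻¹ • (D n *ᵥ θ0)) l)) atTop (𝓝 0) := by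
      have hcont' : Continuous fun A : Matrix (Fin L) (Fin L) ℝ => (A *ᵥ θ0) l := by
        have h1 : Continuous fun A : Matrix (Fin L) (Fin L) ℝ => A *ᵥ θ0 :=
          continuous_id.matrix_mulVec continuous_const
        exact (continuous_apply l).comp h1
      have h2 := (hcont'.tendsto _).comp hDlim
      have h3 : ∀ n : ℕ, ((((n : ℝ)⁻¹ • D n) *ᵥ θ0) l) = (((n : ℝ)⁻¹ • (D n *ᵥ θ0)) l) := by
        intro n
        rw [Matrix.smul_mulVec]
      simp only [Matrix.zero_mulVec, Pi.zero_apply] at h2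
      exact Tendsto.congr h3 h2
    have h1 := tim_pair P (hMU l) (hMUhat l)
    have h2 := tim_of_tendsto (Ω := Ω) P hd
    have h3 := tim_pair P h1 h2
    have := tim_comp P h3
      (g := fun p : (ℝ × ℝ) × ℝ => p.1.1 - p.1.2 - p.2) (by fun_prop)
    simpa [Pi.sub_apply, hF2] using this
  -- combined convergence and composition with g
  have hmain : TendstoInMeasure P (fun n ω => g (F1 n ω, F2 n ω)) atTop
      (fun _ => g ((fun l l' => A0 l l'), h0 - hhat)) := by
    have hpair := tim_pair P hF1lim hF2lim
    exact tim_comp P hpair hgc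
  -- identify the limit
  have hlimval : g ((fun l l' => A0 l l'), h0 - hhat) = A0⁻¹ *ᵥ (h0 - hhat) := rfl
  rw [hlimval] at hmain
  -- identify the functions for n ≥ 1
  intro ε hε
  refine Filter.Tendsto.congr' ?_ (hmain ε hε)
  filter_upwards [Filter.eventually_ge_atTop 1] with n hn
  congr 1
  ext ω
  have hne : ((n : ℝ))⁻¹ ≠ 0 := by
    have : (0 : ℝ) < (n : ℝ) := by exact_mod_cast hn
    positivity
  have hA : Matrix.of (F1 n ω) = ((n : ℝ)⁻¹) • ((M n ω)ᵀ * M n ω + D n) := by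
    ext l l'
    simp [hF1, Matrix.add_apply, Matrix.smul_apply, mul_add, smul_eq_mul]
  have hv : F2 n ω = ((n : ℝ)⁻¹) • ((M n ω)ᵀ *ᵥ (U n ω - Uhat n ω) - (D n) *ᵥ θ0) := by
    funext l
    simp [hF2, Matrix.mulVec_sub, Pi.smul_apply, Pi.sub_apply, smul_eq_mul, mul_sub]
  have key : g (F1 n ω, F2 n ω) =
      ((M n ω)ᵀ * M n ω + D n)⁻¹ *ᵥ ((M n ω)ᵀ *ᵥ (U n ω - Uhat n ω) - (D n) *ᵥ θ0) := by
    rw [hg]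
    simp only
    rw [hA, hv, matrix_smul_inv _ hne, inv_inv, Matrix.smul_mulVec,
      Matrix.mulVec_smul, smul_smul]
    rw [mul_inv_cancel₀ (by exact_mod_cast Nat.cast_ne_zero.mpr (by omega) : (n : ℝ) ≠ 0), one_smul]
  simp only [Set.mem_setOf_eq]
  rw [key]
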